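/- Let n ∈ ℕ and let R, U, H : ℝ → Matrix (Fin n) (Fin n) ℝ be differentiable matrix-valued functions such that for every t, R(t) is orthogonal (R(t)·R(t)ᵀ = 1) and U(t) is invertible. Define F := fun t => R(t)·U(t), ℓ(t) := F'(t)·F(t)⁻¹, r(t) := U'(t)·U(t)⁻¹, and h(t) := R(t)·H(t)·R(t)ᵀ. Then for every t: h'(t) + h(t)·ℓ(t) + ℓ(t)ᵀ·h(t) = R(t)·(H'(t) + H(t)·r(t) + r(t)ᵀ·H(t))·R(t)ᵀ (the lower Oldroyd rates of h and H are objective counterparts of each other). -/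

import Mathlib

open Matrix

/-- Entrywise derivative of a matrix-valued function of a real variable. -/
noncomputable def matDeriv {n : ℕ} (A : ℝ → Matrix (Fin n) (Fin n) ℝ) (t : ℝ) :
    Matrix (Fin n) (Fin n) ℝ :=
  Matrix.of fun i j => deriv (fun s => A s i j) t

lemma matDeriv_mul_entry_diff {n : ℕ} (A B : ℝ → Matrix (Fin n) (Fin n) ℝ) (t : ℝ)
    (hA : ∀ i j, DifferentiableAt ℝ (fun s => A s i j) t)
    (hB : ∀ i j, DifferentiableAt ℝ (fun s => B s i j) t) (i j : Fin n) :
    DifferentiableAt ℝ (fun s => (A s * B s) i j) t := by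
  have : (fun s => (A s * B s) i j) = fun s => ∑ k, A s i k * B s k j := by
    funext s; simp [Matrix.mul_apply]
  rw [this]
  exact DifferentiableAt.fun_sum (A := fun k s => A s i k * B s k j) fun k _ => (hA i k).mul (hB k j)

lemma matDeriv_mul {n : ℕ} (A B : ℝ → Matrix (Fin n) (Fin n) ℝ) (t : ℝ)
    (hA : ∀ i j, DifferentiableAt ℝ (fun s => A s i j) t)
    (hB : ∀ i j, DifferentiableAt ℝ (fun s => B s i j) t) :
    matDeriv (fun s => A s * B s) t = matDeriv A t * B t + A t * matDeriv B t := by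
  ext i j
  have h1 : (fun s => (A s * B s) i j) = fun s => ∑ k, A s i k * B s k j := by
    funext s; simp [Matrix.mul_apply]
  simp only [matDeriv, Matrix.of_apply, Matrix.add_apply, Matrix.mul_apply, h1]
  rw [deriv_fun_sum (A := fun k s => A s i k * B s k j) fun k _ => (hA i k).mul (hB k j)]
  rw [← Finset.sum_add_distrib]
  exact Finset.sum_congr rfl fun k _ => deriv_fun_mul (hA i k) (hB k j)

lemma matDeriv_transpose {n : ℕ} (A : ℝ → Matrix (Fin n) (Fin n) ℝ) (t : ℝ) :
    matDeriv (fun s => (A s)ᵀ) t = (matDeriv A t)ᵀ := by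
  ext i j
  simp [matDeriv]

/-- Proposition 2.1 (lower Oldroyd case): the lower Oldroyd rates of objective
counterparts `h = R·H·Rᵀ` and `H` are objective counterparts of each other. -/
theorem lower_oldroyd_objective_counterpart {n : ℕ}
    (R U H : ℝ → Matrix (Fin n) (Fin n) ℝ)
    (hR : ∀ t, ∀ i j, DifferentiableAt ℝ (fun s => R s i j) t)
    (hU : ∀ t, ∀ i j, DifferentiableAt ℝ (fun s => U s i j) t)
    (hH : ∀ t, ∀ i j, DifferentiableAt ℝ (fun s => H s i j) t)
    (horth : ∀ t, R t * (R t)ᵀ = 1)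
    (hinv : ∀ t, IsUnit (U t)) :
    ∀ t : ℝ,
      let F : ℝ → Matrix (Fin n) (Fin n) ℝ := fun s => R s * U s
      let ℓ : Matrix (Fin n) (Fin n) ℝ := matDeriv F t * (F t)⁻¹
      let r : Matrix (Fin n) (Fin n) ℝ := matDeriv U t * (U t)⁻¹
      let h : ℝ → Matrix (Fin n) (Fin n) ℝ := fun s => R s * H s * (R s)ᵀ
      matDeriv h t + h t * ℓ + ℓᵀ * h t =
        R t * (matDeriv H t + H t * r + rᵀ * H t) * (R t)ᵀ := by
  intro t F ℓ r h
  have hRT : ∀ i j, DifferentiableAt ℝ (fun s => (R s)ᵀ i j) t := fun i j => hR t j i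
  have orth2 : (R t)ᵀ * R t = 1 := mul_eq_one_comm.mp (horth t)
  have cancel1 : ∀ X : Matrix (Fin n) (Fin n) ℝ, R t * ((R t)ᵀ * X) = X := fun X => by
    rw [← Matrix.mul_assoc, horth t, Matrix.one_mul]
  have cancel2 : ∀ X : Matrix (Fin n) (Fin n) ℝ, (R t)ᵀ * (R t * X) = X := fun X => by
    rw [← Matrix.mul_assoc, orth2, Matrix.one_mul]
  -- skew-symmetry of R' Rᵀ
  have skew : matDeriv R t * (R t)ᵀ + R t * (matDeriv R t)ᵀ = 0 := by
    have h0 : matDeriv (fun s => R s * (R s)ᵀ) t = 0 := by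
      have he : (fun s => R s * (R s)ᵀ) = fun _ => (1 : Matrix (Fin n) (Fin n) ℝ) :=
        funext horth
      rw [he]; ext i j; simp [matDeriv]
    rw [matDeriv_mul R (fun s => (R s)ᵀ) t (hR t) hRT, matDeriv_transpose] at h0
    exact h0
  have k2 : (matDeriv R t)ᵀ = -((R t)ᵀ * matDeriv R t * (R t)ᵀ) := by
    have h1 : R t * (matDeriv R t)ᵀ = -(matDeriv R t * (R t)ᵀ) :=
      by rw [eq_neg_iff_add_eq_zero, add_comm]; exact skew
    calc (matDeriv R t)ᵀ = (R t)ᵀ * (R t * (matDeriv R t)ᵀ) := (cancel2 _).symm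
      _ = -((R t)ᵀ * matDeriv R t * (R t)ᵀ) := by rw [h1, Matrix.mul_neg, Matrix.mul_assoc]
  -- value of ℓ
  have hUinv : U t * (U t)⁻¹ = 1 :=
    Matrix.mul_nonsing_inv (U t) ((Matrix.isUnit_iff_isUnit_det (U t)).mp (hinv t))
  have hRinv : (R t)⁻¹ = (R t)ᵀ := Matrix.inv_eq_right_inv (horth t)
  have ℓval : ℓ = matDeriv R t * (R t)ᵀ + R t * r * (R t)ᵀ := by
    show matDeriv F t * (F t)⁻¹ = _
    have hF : matDeriv F t = matDeriv R t * U t + R t * matDeriv U t := by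
      show matDeriv (fun s => R s * U s) t = _
      exact matDeriv_mul R U t (hR t) (hU t)
    have hFinv : (F t)⁻¹ = (U t)⁻¹ * (R t)ᵀ := by
      show (R t * U t)⁻¹ = _
      rw [Matrix.mul_inv_rev, hRinv]
    rw [hF, hFinv, Matrix.add_mul, Matrix.mul_assoc (matDeriv R t), ← Matrix.mul_assoc (U t),
      hUinv, Matrix.one_mul]
    show _ = _ + R t * (matDeriv U t * (U t)⁻¹) * (R t)ᵀ
    rw [Matrix.mul_assoc (R t), Matrix.mul_assoc (R t), Matrix.mul_assoc (matDeriv U t)]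
  -- derivative of h
  have dh : matDeriv h t =
      (matDeriv R t * H t + R t * matDeriv H t) * (R t)ᵀ + R t * H t * (matDeriv R t)ᵀ := by
    show matDeriv (fun s => R s * H s * (R s)ᵀ) t = _
    rw [matDeriv_mul (fun s => R s * H s) (fun s => (R s)ᵀ) t
        (matDeriv_mul_entry_diff R H t (hR t) (hH t)) hRT,
      matDeriv_mul R H t (hR t) (hH t), matDeriv_transpose]
  have hval : h t = R t * H t * (R t)ᵀ := rfl
  rw [dh, ℓval, hval]
  simp only [Matrix.transpose_add, Matrix.transpose_mul, Matrix.transpose_transpose,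
    Matrix.transpose_neg, k2, Matrix.add_mul, Matrix.mul_add, Matrix.mul_neg, Matrix.neg_mul,
    Matrix.mul_assoc, cancel1, cancel2]
  abel
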